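/- Let v : ℝ³ → ℝ³ be differentiable at p ∈ ℝ³ and let ν ∈ ℝ³ be a unit vector with v(p)·ν = 0. Then the tangential projection of the convective term satisfies π_ν( Dv(p) v(p) ) = ½ π_ν( ∇(v·v)(p) ) + ( (curl v)(p)·ν ) ( ν × v(p) ), where ∇(v·v) is the gradient of the scalar function q ↦ v(q)·v(q). (This is the paper's decomposition ∇_v v = ½ Grad_S(v·v) + Rot_S v (ν × v) of the nonlinear term of the surface Navier–Stokes equation.) -/

import Mathlib

noncomputable section
open RealInnerProductSpace

abbrev E3 := EuclideanSpace ℝ (Fin 3)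

/-- Build a vector in `ℝ³` from its three Cartesian components. -/
def vec3 (a b c : ℝ) : E3 := (WithLp.equiv 2 (Fin 3 → ℝ)).symm ![a, b, c]

/-- The `i`-th standard basis vector of `ℝ³`. -/
def e3 (i : Fin 3) : E3 := EuclideanSpace.single i 1

/-- Divergence of a vector field: the trace of its Jacobian. -/
def div3 (v : E3 → E3) (p : E3) : ℝ := LinearMap.trace ℝ E3 (fderiv ℝ v p : E3 →ₗ[ℝ] E3)

/-- Curl of a vector field on `ℝ³`. -/
def curl3 (v : E3 → E3) (p : E3) : E3 :=
  vec3 (fderiv ℝ v p (e3 1) 2 - fderiv ℝ v p (e3 2) 1)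
       (fderiv ℝ v p (e3 2) 0 - fderiv ℝ v p (e3 0) 2)
       (fderiv ℝ v p (e3 0) 1 - fderiv ℝ v p (e3 1) 0)

/-- Cross product on `ℝ³`. -/
def cross3 (a b : E3) : E3 :=
  vec3 (a 1 * b 2 - a 2 * b 1) (a 2 * b 0 - a 0 * b 2) (a 0 * b 1 - a 1 * b 0)

/-- Tangential projection: `π_ν(u) = u − (u·ν)ν`. -/
def tproj (ν u : E3) : E3 := u - ⟪u, ν⟫ • ν

lemma inner_eq (x y : E3) : ⟪x, y⟫ = x 0 * y 0 + x 1 * y 1 + x 2 * y 2 := by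
  simp [PiLp.inner_apply, Fin.sum_univ_three, RCLike.inner_apply]
  ring

lemma grad_inner (f : E3 → ℝ) (x y : E3) : ⟪gradient f x, y⟫ = fderiv ℝ f x y := by
  rw [gradient]; exact InnerProductSpace.toDual_symm_apply

lemma basis_expand (u : E3) : u = u 0 • e3 0 + u 1 • e3 1 + u 2 • e3 2 := by
  ext j; fin_cases j <;> simp [e3, EuclideanSpace.single_apply]

lemma comp_eq (x : E3) (i : Fin 3) : ⟪x, e3 i⟫ = x i := by
  fin_cases i <;> simp [inner_eq, e3, EuclideanSpace.single_apply]

lemma tproj_add (ν x y : E3) : tproj ν (x + y) = tproj ν x + tproj ν y := by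
  simp only [tproj, inner_add_left, add_smul]; abel

lemma tproj_smul (ν : E3) (r : ℝ) (x : E3) : tproj ν (r • x) = r • tproj ν x := by
  simp only [tproj, inner_smul_left, RCLike.star_def, conj_trivial, smul_sub, smul_smul]

lemma key (u ν c : E3) (hν : ν 0^2 + ν 1^2 + ν 2^2 = 1)
    (ht : u 0 * ν 0 + u 1 * ν 1 + u 2 * ν 2 = 0) :
    tproj ν (cross3 c u) = ⟪c, ν⟫ • cross3 ν u := by
  have h0 : tproj ν (cross3 c u) 0 = (⟪c, ν⟫ • cross3 ν u : E3) 0 := by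
    simp [tproj, cross3, inner_eq, vec3, WithLp.equiv_symm_apply, Fin.sum_univ_three]
    linear_combination (-(c 1 * u 2 - c 2 * u 1)) * hν + (-(ν 1 * c 2 - ν 2 * c 1)) * ht
  have h1 : tproj ν (cross3 c u) 1 = (⟪c, ν⟫ • cross3 ν u : E3) 1 := by
    simp [tproj, cross3, inner_eq, vec3, WithLp.equiv_symm_apply, Fin.sum_univ_three]
    linear_combination (-(c 2 * u 0 - c 0 * u 2)) * hν + (-(ν 2 * c 0 - ν 0 * c 2)) * ht
  have h2 : tproj ν (cross3 c u) 2 = (⟪c, ν⟫ • cross3 ν u : E3) 2 := by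
    simp [tproj, cross3, inner_eq, vec3, WithLp.equiv_symm_apply, Fin.sum_univ_three]
    linear_combination (-(c 0 * u 1 - c 1 * u 0)) * hν + (-(ν 0 * c 1 - ν 1 * c 0)) * ht
  ext i; fin_cases i <;> assumption

/-- Decomposition of the convective term: for `v` tangential at `p` (w.r.t. the unit
vector `ν`), `π_ν(∇_v v) = ½ π_ν(∇(v·v)) + (Rot_S v)(ν × v)`. -/
theorem convective_term_decomposition
    (v : E3 → E3) (p ν : E3) (hν : ‖ν‖ = 1)
    (hv : DifferentiableAt ℝ v p) (htan : ⟪v p, ν⟫ = 0) :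
    tproj ν (fderiv ℝ v p (v p)) =
      (1 / 2 : ℝ) • tproj ν (gradient (fun q => ⟪v q, v q⟫) p) +
        ⟪curl3 v p, ν⟫ • cross3 ν (v p) := by
  set u := v p with hu
  set A := fderiv ℝ v p with hA
  set G := gradient (fun q => ⟪v q, v q⟫) p with hG
  have hν2 : ν 0 ^ 2 + ν 1 ^ 2 + ν 2 ^ 2 = 1 := by
    have h := real_inner_self_eq_norm_sq ν
    rw [inner_eq, hν] at h
    linarith [h]
  have ht' : u 0 * ν 0 + u 1 * ν 1 + u 2 * ν 2 = 0 := by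
    rw [inner_eq] at htan; exact htan
  -- gradient components
  have hGw : ∀ w : E3, ⟪G, w⟫ = 2 * ⟪A w, u⟫ := by
    intro w
    rw [hG, grad_inner, fderiv_inner_apply ℝ hv hv w, ← hu, ← hA, real_inner_comm u (A w)]
    ring
  have hGi : ∀ i : Fin 3, G i = 2 * ⟪A (e3 i), u⟫ := by
    intro i; rw [← comp_eq G i, hGw (e3 i)]
  -- A u in terms of basis images
  have hAu : A u = u 0 • A (e3 0) + u 1 • A (e3 1) + u 2 • A (e3 2) := by
    conv_lhs => rw [basis_expand u]
    simp [map_add, map_smul]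
  -- structural identity: A u = ½ G + (curl) × u
  have hmain : A u = (1 / 2 : ℝ) • G + cross3 (curl3 v p) u := by
    ext i
    have hGi' := hGi i
    rw [inner_eq] at hGi'
    fin_cases i <;>
      simp [hAu, curl3, cross3, vec3, WithLp.equiv_symm_apply, hGi 0, hGi 1, hGi 2,
        inner_eq, Fin.sum_univ_three, ← hA] <;>
      ring
  rw [hmain, tproj_add, tproj_smul, key u ν (curl3 v p) hν2 ht']
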